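/- Let κ, t, ℓ be positive integers with ℓ < t and 16t ≤ κ, and let H be a K_{t,t}-free simple graph on κ vertices with vertex set V. Set λ = (κ−ℓ)/t, γ = λ^{−ℓ/(2t)}, and x = γκ + (1−γ)t. Then the number of ℓ-element subsets S of V with |N(S)| ≥ x is at most C(κ,ℓ) · 2^{−ℓ/2}. -/

import Mathlib

open Finset

private def NSet {V : Type} [Fintype V] (H : SimpleGraph V) [DecidableRel H.Adj]
    (S : Finset V) : Finset V :=
  Finset.univ.filter (fun v => ∀ u ∈ S, H.Adj u v)

private lemma dc {V : Type} [Fintype V] [DecidableEq V]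
    (H : SimpleGraph V) [DecidableRel H.Adj]
    (t ℓ n : ℕ) (F : Finset (Finset V))
    (hF : ∀ S ∈ F, S.card = ℓ ∧ n ≤ (NSet H S).card)
    (hNW : ∀ W : Finset V, W.card = t → (NSet H W).card ≤ t - 1) :
    F.card * n.choose t ≤ (Fintype.card V).choose t * (t - 1).choose ℓ := by
  classical
  calc F.card * n.choose t
      = ∑ _S ∈ F, n.choose t := by rw [Finset.sum_const, smul_eq_mul]
    _ ≤ ∑ S ∈ F, ((Finset.univ.powersetCard t).filter (fun W => W ⊆ NSet H S)).card := by
        apply Finset.sum_le_sum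
        intro S hS
        have he : (Finset.univ.powersetCard t).filter (fun W => W ⊆ NSet H S)
            = (NSet H S).powersetCard t := by
          ext W
          simp only [Finset.mem_filter, Finset.mem_powersetCard, Finset.subset_univ, true_and]
          tauto
        rw [he, Finset.card_powersetCard]
        exact Nat.choose_le_choose t (hF S hS).2
    _ = ∑ S ∈ F, ∑ W ∈ Finset.univ.powersetCard t, if W ⊆ NSet H S then 1 else 0 :=
        Finset.sum_congr rfl fun S _ => by rw [Finset.card_filter]
    _ = ∑ W ∈ Finset.univ.powersetCard t, ∑ S ∈ F, if W ⊆ NSet H S then 1 else 0 :=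
        Finset.sum_comm
    _ = ∑ W ∈ Finset.univ.powersetCard t, (F.filter (fun S => W ⊆ NSet H S)).card :=
        Finset.sum_congr rfl fun W _ => by rw [Finset.card_filter]
    _ ≤ ∑ _W ∈ Finset.univ.powersetCard t, (t - 1).choose ℓ := by
        apply Finset.sum_le_sum
        intro W hW
        have hWt : W.card = t := (Finset.mem_powersetCard.mp hW).2
        have hsub : F.filter (fun S => W ⊆ NSet H S) ⊆ (NSet H W).powersetCard ℓ := by
          intro S hS
          rw [Finset.mem_filter] at hS
          rw [Finset.mem_powersetCard]
          refine ⟨?_, (hF S hS.1).1⟩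
          intro u hu
          simp only [NSet, Finset.mem_filter, Finset.mem_univ, true_and]
          intro w hw
          have h2 := hS.2 hw
          simp only [NSet, Finset.mem_filter, Finset.mem_univ, true_and] at h2
          exact (h2 u hu).symm
        calc (F.filter (fun S => W ⊆ NSet H S)).card
            ≤ ((NSet H W).powersetCard ℓ).card := Finset.card_le_card hsub
          _ = (NSet H W).card.choose ℓ := Finset.card_powersetCard _ _
          _ ≤ (t - 1).choose ℓ := Nat.choose_le_choose ℓ (hNW W hWt)
    _ = (Fintype.card V).choose t * (t - 1).choose ℓ := by
        rw [Finset.sum_const, smul_eq_mul, Finset.card_powersetCard, Finset.card_univ]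

private lemma choose_mul_pow_le {a b s : ℕ} {c : ℝ} (hc0 : 0 ≤ c)
    (hsa : s ≤ a) (hsb : s ≤ b)
    (h : ∀ i < s, c * ((a : ℝ) - i) ≤ (b : ℝ) - i) :
    (a.choose s : ℝ) * c ^ s ≤ (b.choose s : ℝ) := by
  have hcast : ∀ m : ℕ, s ≤ m → (m.descFactorial s : ℝ) = ∏ i ∈ range s, ((m : ℝ) - i) := by
    intro m hm
    rw [Nat.descFactorial_eq_prod_range, Nat.cast_prod]
    refine Finset.prod_congr rfl fun i hi => ?_
    rw [Nat.cast_sub (le_of_lt (lt_of_lt_of_le (Finset.mem_range.mp hi) hm))]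
  have key : (a.descFactorial s : ℝ) * c ^ s ≤ (b.descFactorial s : ℝ) := by
    rw [hcast a hsa, hcast b hsb]
    calc (∏ i ∈ range s, ((a : ℝ) - i)) * c ^ s
        = ∏ i ∈ range s, (c * ((a : ℝ) - i)) := by
          rw [Finset.prod_mul_distrib, Finset.prod_const, Finset.card_range, mul_comm]
      _ ≤ ∏ i ∈ range s, ((b : ℝ) - i) := by
          apply Finset.prod_le_prod
          · intro i hi
            apply mul_nonneg hc0
            have : (i : ℝ) ≤ (a : ℝ) := by
              exact_mod_cast Nat.le_of_lt (lt_of_lt_of_le (Finset.mem_range.mp hi) hsa)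
            linarith
          · intro i hi
            exact h i (Finset.mem_range.mp hi)
  have hfac : (0:ℝ) < (Nat.factorial s : ℝ) := by exact_mod_cast Nat.factorial_pos s
  have ha' : (a.descFactorial s : ℝ) = (Nat.factorial s : ℝ) * (a.choose s : ℝ) := by
    exact_mod_cast congrArg (Nat.cast : ℕ → ℝ) (Nat.descFactorial_eq_factorial_mul_choose a s)
  have hb' : (b.descFactorial s : ℝ) = (Nat.factorial s : ℝ) * (b.choose s : ℝ) := by
    exact_mod_cast congrArg (Nat.cast : ℕ → ℝ) (Nat.descFactorial_eq_factorial_mul_choose b s)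
  rw [ha', hb', mul_assoc] at key
  exact le_of_mul_le_mul_left key hfac

/-- In a `K_{t,t}`-free graph `H` on `κ` vertices (with `ℓ < t`, `16t ≤ κ`), letting
`λ = (κ−ℓ)/t`, `γ = λ^(−ℓ/(2t))` and `x = γκ + (1−γ)t`, the number of `ℓ`-element vertex
subsets `S` with `|N(S)| ≥ x` is at most `C(κ,ℓ)·2^(−ℓ/2)`. -/
theorem stmt_10 {V : Type} [Fintype V] (κ t ℓ : ℕ) (hℓ : 0 < ℓ) (hlt : ℓ < t)
    (htκ : 16 * t ≤ κ) (H : SimpleGraph V) (hκ : Fintype.card V = κ)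
    (hfree : ¬ ∃ A B : Finset V, Disjoint A B ∧ A.card = t ∧ B.card = t ∧
      ∀ a ∈ A, ∀ b ∈ B, H.Adj a b)
    (lam γ x : ℝ)
    (hlam : lam = ((κ : ℝ) - ℓ) / t)
    (hγ : γ = lam ^ (-(ℓ : ℝ) / (2 * t)))
    (hx : x = γ * κ + (1 - γ) * t) :
    (Nat.card {S : Finset V // S.card = ℓ ∧
        x ≤ (Nat.card {v : V | ∀ u ∈ S, H.Adj u v} : ℝ)} : ℝ)
      ≤ (κ.choose ℓ : ℝ) * (2 : ℝ) ^ (-(ℓ : ℝ) / 2) := by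
  classical
  -- basic numeric facts
  have ht0 : 0 < t := lt_trans hℓ hlt
  have htκ' : t ≤ κ := le_trans (by omega) htκ
  have hℓκ : ℓ ≤ κ := le_trans (le_of_lt hlt) htκ'
  have htR : (0:ℝ) < t := by exact_mod_cast ht0
  have hℓtR : (ℓ:ℝ) < (t:ℝ) := by exact_mod_cast hlt
  have hκR : (16:ℝ) * t ≤ κ := by exact_mod_cast htκ
  have hlam2 : (2:ℝ) ≤ lam := by
    rw [hlam, le_div_iff₀ htR]; nlinarith
  have hlam1 : (1:ℝ) ≤ lam := by linarith
  have hlam0 : (0:ℝ) < lam := by linarith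
  have hγ0 : (0:ℝ) < γ := by rw [hγ]; exact Real.rpow_pos_of_pos hlam0 _
  have hγ1 : γ ≤ 1 := by
    rw [hγ]
    apply Real.rpow_le_one_of_one_le_of_nonpos hlam1
    apply div_nonpos_of_nonpos_of_nonneg
    · simp
    · positivity
  have htκR : (t:ℝ) ≤ (κ:ℝ) := by exact_mod_cast htκ'
  have hxt : (t:ℝ) ≤ x := by rw [hx]; nlinarith
  set n : ℕ := ⌈x⌉₊ with hn
  have hxn : x ≤ (n:ℝ) := Nat.le_ceil x
  have htn : t ≤ n := by
    have : (t:ℝ) ≤ (n:ℝ) := le_trans hxt hxn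
    exact_mod_cast this
  -- the common neighborhood, and the finset of rich sets
  set F : Finset (Finset V) :=
    Finset.univ.filter (fun S => S.card = ℓ ∧ x ≤ ((NSet H S).card : ℝ)) with hF
  -- identify Nat.card with Finset cards
  have hNcard : ∀ S : Finset V,
      (Nat.card {v : V | ∀ u ∈ S, H.Adj u v} : ℕ) = (NSet H S).card := by
    intro S
    rw [Nat.card_coe_set_eq, Set.ncard_eq_toFinset_card']
    congr 1
    ext v
    simp [NSet]
  have hmain : (Nat.card {S : Finset V // S.card = ℓ ∧
      x ≤ (Nat.card {v : V | ∀ u ∈ S, H.Adj u v} : ℝ)} : ℕ) = F.card := by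
    rw [Nat.card_eq_fintype_card, Fintype.card_subtype, hF]
    exact congrArg Finset.card (Finset.filter_congr (fun S _ => by rw [hNcard S]))
  -- K_{t,t}-freeness: common neighborhoods of t-sets are small
  have hNW : ∀ W : Finset V, W.card = t → (NSet H W).card ≤ t - 1 := by
    intro W hWt
    by_contra hb
    push_neg at hb
    have hle : t ≤ (NSet H W).card := by omega
    obtain ⟨B, hBsub, hBcard⟩ := Finset.exists_subset_card_eq hle
    apply hfree
    refine ⟨W, B, ?_, hWt, hBcard, ?_⟩
    · rw [Finset.disjoint_left]
      intro a haW haB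
      have := hBsub haB
      simp only [NSet, Finset.mem_filter, Finset.mem_univ, true_and] at this
      exact H.irrefl (this a haW)
    · intro a ha b hb'
      have := hBsub hb'
      simp only [NSet, Finset.mem_filter, Finset.mem_univ, true_and] at this
      exact this a ha
  have hFmem : ∀ S ∈ F, S.card = ℓ ∧ n ≤ (NSet H S).card := by
    intro S hS
    rw [hF, Finset.mem_filter] at hS
    exact ⟨hS.2.1, Nat.ceil_le.mpr hS.2.2⟩
  -- the double counting inequality, in ℕ
  have hdc : F.card * n.choose t ≤ κ.choose t * (t - 1).choose ℓ := by
    have := dc H t ℓ n F hFmem hNW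
    rwa [hκ] at this
  -- real versions of choose-ratio bounds
  have hb : (κ.choose t : ℝ) * γ ^ t ≤ (n.choose t : ℝ) := by
    apply choose_mul_pow_le (le_of_lt hγ0) htκ' htn
    intro i hi
    have hiR : (i:ℝ) ≤ (t:ℝ) := by exact_mod_cast le_of_lt hi
    have h1 : (0:ℝ) ≤ (1 - γ) * ((t:ℝ) - i) := by
      apply mul_nonneg <;> linarith
    have h2 : x ≤ (n:ℝ) := hxn
    rw [hx] at h2
    nlinarith
  have hc : ((t - 1).choose ℓ : ℝ) * lam ^ ℓ ≤ (κ.choose ℓ : ℝ) := by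
    apply choose_mul_pow_le (le_of_lt hlam0) (by omega) hℓκ
    intro i hi
    have ht1 : (((t - 1 : ℕ)) : ℝ) = (t:ℝ) - 1 := by
      have : (1:ℕ) ≤ t := ht0
      push_cast [this]; ring
    rw [ht1]
    have hiR : (i:ℝ) ≤ (ℓ:ℝ) - 1 := by
      have : i + 1 ≤ ℓ := hi
      have := (Nat.cast_le (α := ℝ)).mpr this
      push_cast at this; linarith
    have hlamt : lam * t = (κ:ℝ) - ℓ := by
      rw [hlam]; field_simp
    nlinarith [mul_nonneg (sub_nonneg.mpr hlam1) (by linarith : (0:ℝ) ≤ (i:ℝ) + 1)]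
  -- combine
  have hCn : (0:ℝ) < (n.choose t : ℝ) := by
    exact_mod_cast Nat.choose_pos htn
  have hdcR : (F.card : ℝ) * (n.choose t : ℝ) ≤ (κ.choose t : ℝ) * ((t-1).choose ℓ : ℝ) := by
    exact_mod_cast hdc
  have hpos1 : (0:ℝ) < γ ^ t := pow_pos hγ0 t
  have hpos2 : (0:ℝ) < lam ^ ℓ := pow_pos hlam0 ℓ
  have hstep : (F.card : ℝ) * (γ ^ t * lam ^ ℓ) ≤ (κ.choose ℓ : ℝ) := by
    have h1 : (F.card : ℝ) * (n.choose t : ℝ) * (γ ^ t * lam ^ ℓ)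
        ≤ ((κ.choose t : ℝ) * γ ^ t) * (((t-1).choose ℓ : ℝ) * lam ^ ℓ) := by
      have := mul_le_mul_of_nonneg_right hdcR (le_of_lt (mul_pos hpos1 hpos2))
      calc (F.card : ℝ) * (n.choose t : ℝ) * (γ ^ t * lam ^ ℓ)
          ≤ (κ.choose t : ℝ) * ((t-1).choose ℓ : ℝ) * (γ ^ t * lam ^ ℓ) := this
        _ = ((κ.choose t : ℝ) * γ ^ t) * (((t-1).choose ℓ : ℝ) * lam ^ ℓ) := by ring
    have h2 : ((κ.choose t : ℝ) * γ ^ t) * (((t-1).choose ℓ : ℝ) * lam ^ ℓ)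
        ≤ (n.choose t : ℝ) * (κ.choose ℓ : ℝ) := by
      apply mul_le_mul hb hc (by positivity) (le_of_lt hCn)
    have h3 : (F.card : ℝ) * (γ ^ t * lam ^ ℓ) * (n.choose t : ℝ)
        ≤ (κ.choose ℓ : ℝ) * (n.choose t : ℝ) := by
      calc (F.card : ℝ) * (γ ^ t * lam ^ ℓ) * (n.choose t : ℝ)
          = (F.card : ℝ) * (n.choose t : ℝ) * (γ ^ t * lam ^ ℓ) := by ring
        _ ≤ (n.choose t : ℝ) * (κ.choose ℓ : ℝ) := le_trans h1 h2
        _ = (κ.choose ℓ : ℝ) * (n.choose t : ℝ) := by ring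
    exact le_of_mul_le_mul_right h3 hCn
  -- compute γ^t * lam^ℓ = lam ^ (ℓ/2)
  have hpow : γ ^ t * lam ^ ℓ = lam ^ ((ℓ:ℝ) / 2) := by
    rw [hγ, ← Real.rpow_natCast (lam ^ (-(ℓ : ℝ) / (2 * t))) t,
      ← Real.rpow_mul (le_of_lt hlam0), ← Real.rpow_natCast lam ℓ,
      ← Real.rpow_add hlam0]
    congr 1
    field_simp
    ring
  rw [hpow] at hstep
  -- final comparison with 2 ^ (-ℓ/2)
  have hfin : lam ^ (-(ℓ:ℝ) / 2) ≤ (2:ℝ) ^ (-(ℓ:ℝ) / 2) := by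
    rw [neg_div, Real.rpow_neg (le_of_lt hlam0), Real.rpow_neg (by norm_num : (0:ℝ) ≤ 2)]
    apply inv_anti₀
    · exact Real.rpow_pos_of_pos (by norm_num) _
    · exact Real.rpow_le_rpow (by norm_num) hlam2 (by positivity)
  have hlampos : (0:ℝ) < lam ^ ((ℓ:ℝ) / 2) := Real.rpow_pos_of_pos hlam0 _
  have hm : (F.card : ℝ) ≤ (κ.choose ℓ : ℝ) * lam ^ (-(ℓ:ℝ) / 2) := by
    rw [neg_div, Real.rpow_neg (le_of_lt hlam0), ← div_eq_mul_inv, le_div_iff₀ hlampos]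
    exact hstep
  calc (Nat.card {S : Finset V // S.card = ℓ ∧
        x ≤ (Nat.card {v : V | ∀ u ∈ S, H.Adj u v} : ℝ)} : ℝ)
      = (F.card : ℝ) := by exact_mod_cast congrArg (Nat.cast : ℕ → ℝ) hmain
    _ ≤ (κ.choose ℓ : ℝ) * lam ^ (-(ℓ:ℝ) / 2) := hm
    _ ≤ (κ.choose ℓ : ℝ) * (2:ℝ) ^ (-(ℓ:ℝ) / 2) := by
        apply mul_le_mul_of_nonneg_left hfin (by positivity)
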